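/- Let λ ∈ ℝ and let a : ℕ → ℝ be any sequence (the coefficients of an invertible power series A(t)). For k ∈ ℕ define ℓ_{k,λ}(x) := (1/k!)·Σ_{j=0}^{k} (−x)^j·(1)_{j,λ}·L(k,j) (the coefficient of t^k in e_λ(−xt/(1−t))), and define y_{n,λ}(x) := Σ_{k=0}^{n} a_{n−k}·ℓ_{k,λ}(x) (the coefficient of t^n in A(t)·e_λ(−xt/(1−t))). Then for every n ≥ 1 and every x ∈ ℝ: y′_{n,λ}(x) = −Σ_{k=1}^{n} Σ_{l=1}^{k} x^{l−1}·λ^{l−1}·C(k−1, k−l)·y_{n−k,λ}(x), where ′ denotes the derivative with respect to x. -/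

import Mathlib

/-- The degenerate falling factorial `(1)_{m,λ} = ∏_{j=0}^{m-1} (1 - jλ)`. -/
noncomputable def degFall (lam : ℝ) (m : ℕ) : ℝ :=
  ∏ j ∈ Finset.range m, (1 - (j : ℝ) * lam)

/-- The Lah numbers: `L(n,k) = C(n−1,k−1)·n!/k!` for `1 ≤ k ≤ n`, with
`L(0,0) = 1` and `L(n,0) = 0` for `n ≥ 1`. -/
noncomputable def lah (n k : ℕ) : ℝ :=
  if k = 0 then (if n = 0 then 1 else 0)
  else (Nat.choose (n - 1) (k - 1) : ℝ) * (Nat.factorial n : ℝ) / (Nat.factorial k : ℝ)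

/-- `ℓ_{k,λ}(x)`: the coefficient of `t^k` in `e_λ(−xt/(1−t))`. -/
noncomputable def ellCoeff (lam : ℝ) (k : ℕ) (x : ℝ) : ℝ :=
  (1 / (Nat.factorial k : ℝ)) * ∑ j ∈ Finset.range (k + 1), (-x) ^ j * degFall lam j * lah k j

/-- `y_{n,λ}(x)`: the coefficient of `tⁿ` in `A(t)·e_λ(−xt/(1−t))`, where `A(t) = ∑ aₙ tⁿ`. -/
noncomputable def yCoeff (lam : ℝ) (a : ℕ → ℝ) (n : ℕ) (x : ℝ) : ℝ :=
  ∑ k ∈ Finset.range (n + 1), a (n - k) * ellCoeff lam k x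

noncomputable def ellD (lam : ℝ) (k : ℕ) (x : ℝ) : ℝ :=
  (1 / (Nat.factorial k : ℝ)) * ∑ j ∈ Finset.range (k + 1),
    (-(j:ℝ)) * (-x) ^ (j-1) * degFall lam j * lah k j

lemma lah_zero {k : ℕ} (hk : 1 ≤ k) : lah k 0 = 0 := by
  simp [lah]; omega

lemma lah_top {k : ℕ} (hk : 1 ≤ k) : lah k (k+1) = 0 := by
  have : (k-1).choose k = 0 := Nat.choose_eq_zero_of_lt (by omega)
  simp [lah, this]

lemma degFall_succ (lam : ℝ) (j : ℕ) :
    degFall lam (j+1) = degFall lam j * (1 - (j:ℝ)*lam) := by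
  simp [degFall, Finset.prod_range_succ]

lemma hasDerivAt_ell (lam : ℝ) (k : ℕ) (x : ℝ) :
    HasDerivAt (ellCoeff lam k) (ellD lam k x) x := by
  have h : ∀ j ∈ Finset.range (k+1), HasDerivAt
      (fun y : ℝ => (-y) ^ j * degFall lam j * lah k j)
      ((-(j:ℝ)) * (-x) ^ (j-1) * degFall lam j * lah k j) x := by
    intro j _
    have h1 : HasDerivAt (fun y : ℝ => (-y) ^ j)
        ((j:ℝ) * (-x) ^ (j-1) * (-1)) x := ((hasDerivAt_id x).neg).pow j
    have := (h1.mul_const (degFall lam j)).mul_const (lah k j)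
    refine this.congr_deriv ?_
    ring
  have hs := HasDerivAt.fun_sum h
  have := hs.const_mul (1 / (Nat.factorial k : ℝ))
  exact this

lemma lah_succ (k j : ℕ) (hk : 1 ≤ k) :
    (j:ℝ) * lah (k+1) j = (j:ℝ)*((k:ℝ)+1)*lah k j + ((k:ℝ)+1)*lah k (j-1) := by
  have hfk : (Nat.factorial k : ℝ) ≠ 0 := Nat.cast_ne_zero.2 (Nat.factorial_ne_zero k)
  match j with
  | 0 =>
    have : ¬ k = 0 := by omega
    simp [lah, this]
  | 1 =>
    simp only [lah]
    have h0 : ¬ k = 0 := by omega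
    simp [lah, h0, Nat.factorial_succ]
  | (j+2) =>
    have hfj : (Nat.factorial (j+1) : ℝ) ≠ 0 := Nat.cast_ne_zero.2 (Nat.factorial_ne_zero _)
    have hpas : (Nat.choose k (j+1) : ℝ) = Nat.choose (k-1) j + Nat.choose (k-1) (j+1) := by
      have : k = (k-1)+1 := by omega
      rw [this, Nat.choose_succ_succ (k-1) j]
      push_cast; ring
    simp only [lah, if_neg (by omega : ¬ j+2 = 0), if_neg (by omega : ¬ j+1 = 0)]
    have h1 : ((j:ℕ)+2) - 1 = j+1 := rfl
    simp only [Nat.add_sub_cancel, h1]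
    rw [Nat.factorial_succ (j+1), Nat.factorial_succ k]
    push_cast [hpas]
    field_simp
    ring

lemma ellD_succ (lam x : ℝ) (k : ℕ) :
    ellD lam (k+1) x = (1 + lam*x) * ellD lam k x - ellCoeff lam k x := by
  rcases Nat.eq_zero_or_pos k with rfl | hk
  · simp [ellD, ellCoeff, Finset.sum_range_succ, lah, degFall]
  have hfk : (Nat.factorial k : ℝ) ≠ 0 := Nat.cast_ne_zero.2 (Nat.factorial_ne_zero k)
  have hk1 : ((k:ℝ)+1) ≠ 0 := by positivity
  have key : ∀ j ∈ Finset.range (k+2),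
      (1/((k+1).factorial:ℝ)) * ((-(j:ℝ)) * (-x)^(j-1) * degFall lam j * lah (k+1) j)
      = (1/(k.factorial:ℝ)) * ((-(j:ℝ)) * (-x)^(j-1) * degFall lam j * lah k j)
        + (1/(k.factorial:ℝ)) * (-((-x)^(j-1)) * degFall lam j * lah k (j-1)) := by
    intro j _
    have h := lah_succ k j hk
    have h2 : (j:ℝ) * lah (k+1) j / ((k:ℝ)+1) = (j:ℝ)*lah k j + lah k (j-1) := by
      rw [h]; field_simp
    have hfs : (1:ℝ)/(((k+1).factorial:ℝ)) = (1/((k:ℝ)+1)) * (1/(k.factorial:ℝ)) := by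
      rw [Nat.factorial_succ]; push_cast; field_simp
    rw [hfs]
    linear_combination (-((Nat.factorial k:ℝ))⁻¹ * (-x)^(j-1) * degFall lam j) * h2
  have key2 : ∀ i ∈ Finset.range (k+1),
      (1/(k.factorial:ℝ)) * (-((-x)^((i+1)-1)) * degFall lam (i+1) * lah k i)
      = -((1/(k.factorial:ℝ)) * ((-x)^i * degFall lam i * lah k i))
        + lam * x * ((1/(k.factorial:ℝ)) * ((-(i:ℝ)) * (-x)^(i-1) * degFall lam i * lah k i)) := by
    intro i _
    rw [degFall_succ]
    have hp : (i:ℝ) * (-x)^i = x * (-(i:ℝ)) * (-x)^(i-1) := by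
      cases i with
      | zero => simp
      | succ m =>
        have hm : (m+1) - 1 = m := rfl
        rw [hm, pow_succ (-x) m]
        push_cast
        ring
    simp only [Nat.add_sub_cancel]
    linear_combination (lam * degFall lam i * lah k i * ((Nat.factorial k:ℝ))⁻¹) * hp
  have hu : ∑ i ∈ Finset.range (k+1), (1/(k.factorial:ℝ)) * ((-x)^i * degFall lam i * lah k i)
      = ellCoeff lam k x := by rw [ellCoeff, Finset.mul_sum]
  have hv : ∑ i ∈ Finset.range (k+1),
      (1/(k.factorial:ℝ)) * ((-(i:ℝ)) * (-x)^(i-1) * degFall lam i * lah k i)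
      = ellD lam k x := by rw [ellD, Finset.mul_sum]
  have hS1 : ∑ j ∈ Finset.range (k+2),
      (1/(k.factorial:ℝ)) * ((-(j:ℝ)) * (-x)^(j-1) * degFall lam j * lah k j)
      = ellD lam k x := by
    rw [Finset.sum_range_succ, lah_top hk, ← hv]
    simp
  have hS2 : ∑ j ∈ Finset.range (k+2),
      (1/(k.factorial:ℝ)) * (-((-x)^(j-1)) * degFall lam j * lah k (j-1))
      = ∑ i ∈ Finset.range (k+1),
        (1/(k.factorial:ℝ)) * (-((-x)^((i+1)-1)) * degFall lam (i+1) * lah k i) := by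
    rw [Finset.sum_range_succ']
    simp [lah_zero hk]
  calc ellD lam (k+1) x
      = ∑ j ∈ Finset.range (k+2),
          (1/((k+1).factorial:ℝ)) * ((-(j:ℝ)) * (-x)^(j-1) * degFall lam j * lah (k+1) j) := by
        rw [ellD, Finset.mul_sum]
    _ = ∑ j ∈ Finset.range (k+2),
          ((1/(k.factorial:ℝ)) * ((-(j:ℝ)) * (-x)^(j-1) * degFall lam j * lah k j)
           + (1/(k.factorial:ℝ)) * (-((-x)^(j-1)) * degFall lam j * lah k (j-1))) :=
        Finset.sum_congr rfl key
    _ = (∑ j ∈ Finset.range (k+2),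
          (1/(k.factorial:ℝ)) * ((-(j:ℝ)) * (-x)^(j-1) * degFall lam j * lah k j))
        + ∑ j ∈ Finset.range (k+2),
          (1/(k.factorial:ℝ)) * (-((-x)^(j-1)) * degFall lam j * lah k (j-1)) :=
        Finset.sum_add_distrib
    _ = ellD lam k x
        + ∑ i ∈ Finset.range (k+1),
          (1/(k.factorial:ℝ)) * (-((-x)^((i+1)-1)) * degFall lam (i+1) * lah k i) := by
        rw [hS1, hS2]
    _ = ellD lam k x
        + ∑ i ∈ Finset.range (k+1),
          (-((1/(k.factorial:ℝ)) * ((-x)^i * degFall lam i * lah k i))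
           + lam * x * ((1/(k.factorial:ℝ)) * ((-(i:ℝ)) * (-x)^(i-1) * degFall lam i * lah k i))) := by
        rw [Finset.sum_congr rfl key2]
    _ = ellD lam k x
        + (-(∑ i ∈ Finset.range (k+1), (1/(k.factorial:ℝ)) * ((-x)^i * degFall lam i * lah k i))
           + lam * x * ∑ i ∈ Finset.range (k+1),
             (1/(k.factorial:ℝ)) * ((-(i:ℝ)) * (-x)^(i-1) * degFall lam i * lah k i)) := by
        rw [Finset.sum_add_distrib, Finset.sum_neg_distrib, Finset.mul_sum]
    _ = (1 + lam*x) * ellD lam k x - ellCoeff lam k x := by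
        rw [hu, hv]; ring

lemma ellD_eq (lam x : ℝ) : ∀ s : ℕ, ellD lam s x
    = -∑ j ∈ Finset.range s, (1 + lam*x)^(s-1-j) * ellCoeff lam j x := by
  intro s
  induction s with
  | zero => simp [ellD]
  | succ s ih =>
    rw [ellD_succ, ih, Finset.sum_range_succ]
    have : ∀ j ∈ Finset.range s,
        (1 + lam*x)^(s+1-1-j) * ellCoeff lam j x
        = (1 + lam*x) * ((1 + lam*x)^(s-1-j) * ellCoeff lam j x) := by
      intro j hj
      rw [Finset.mem_range] at hj
      rw [show s+1-1-j = (s-1-j)+1 by omega, pow_succ]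
      ring
    rw [Finset.sum_congr rfl this]
    rw [← Finset.mul_sum]
    have h0 : s+1-1-s = 0 := by omega
    rw [h0]
    ring

lemma innerSum (lam x : ℝ) (k : ℕ) (hk : 1 ≤ k) :
    ∑ l ∈ Finset.Icc 1 k, x^(l-1) * lam^(l-1) * ((k-1).choose (k-l) : ℝ)
      = (1 + lam*x)^(k-1) := by
  have hbij : ∑ l ∈ Finset.Icc 1 k, x^(l-1) * lam^(l-1) * ((k-1).choose (k-l) : ℝ)
      = ∑ i ∈ Finset.range k, (x*lam)^i * (1:ℝ)^(k-1-i) * ((k-1).choose i : ℝ) := by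
    apply Finset.sum_nbij' (i := fun l => l - 1) (j := fun i => i + 1)
    · intro l hl; rw [Finset.mem_Icc] at hl; rw [Finset.mem_range]; omega
    · intro i hi; rw [Finset.mem_range] at hi; rw [Finset.mem_Icc]; omega
    · intro l hl; rw [Finset.mem_Icc] at hl; omega
    · intro i hi; omega
    · intro l hl
      rw [Finset.mem_Icc] at hl
      rw [show k-l = (k-1)-(l-1) by omega, Nat.choose_symm (by omega : l-1 ≤ k-1)]
      rw [mul_pow]
      ring
  rw [hbij]
  have := add_pow (x*lam) (1:ℝ) (k-1)
  rw [show (k-1)+1 = k by omega] at this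
  rw [← this]
  rw [show x*lam+1 = 1+lam*x by ring]

/-- Theorem 6, second identity:
`y′_{n,λ}(x) = −∑_{k=1}^n ∑_{l=1}^k x^{l−1} λ^{l−1} C(k−1,k−l) y_{n−k,λ}(x)` for `n ≥ 1`. -/
theorem yCoeff_deriv_sum (lam : ℝ) (a : ℕ → ℝ) (n : ℕ) (hn : 1 ≤ n) (x : ℝ) :
    deriv (yCoeff lam a n) x =
      -∑ k ∈ Finset.Icc 1 n, ∑ l ∈ Finset.Icc 1 k,
        x ^ (l - 1) * lam ^ (l - 1) * (Nat.choose (k - 1) (k - l) : ℝ) *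
          yCoeff lam a (n - k) x := by
  have hd : HasDerivAt (yCoeff lam a n)
      (∑ k ∈ Finset.range (n+1), a (n-k) * ellD lam k x) x := by
    have he : yCoeff lam a n = fun y => ∑ k ∈ Finset.range (n+1), a (n-k) * ellCoeff lam k y := by
      funext y; rfl
    rw [he]
    exact HasDerivAt.fun_sum fun k _ => (hasDerivAt_ell lam k x).const_mul (a (n-k))
  rw [hd.deriv]
  have hR : ∀ k ∈ Finset.Icc 1 n,
      (∑ l ∈ Finset.Icc 1 k, x^(l-1)*lam^(l-1)*((k-1).choose (k-l):ℝ) * yCoeff lam a (n-k) x)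
      = (1+lam*x)^(k-1) * yCoeff lam a (n-k) x := by
    intro k hk
    rw [Finset.mem_Icc] at hk
    rw [← Finset.sum_mul, innerSum lam x k hk.1]
  rw [Finset.sum_congr rfl hR]
  have hL : ∀ k ∈ Finset.range (n+1), a (n-k) * ellD lam k x
      = ∑ j ∈ Finset.range k, -(a (n-k) * ((1+lam*x)^(k-1-j) * ellCoeff lam j x)) := by
    intro k _
    rw [ellD_eq lam x k, mul_neg, Finset.mul_sum, ← Finset.sum_neg_distrib]
  rw [Finset.sum_congr rfl hL]
  have hRHS : -∑ k ∈ Finset.Icc 1 n, (1+lam*x)^(k-1) * yCoeff lam a (n-k) x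
      = ∑ k ∈ Finset.Icc 1 n, ∑ j ∈ Finset.range (n-k+1),
          -((1+lam*x)^(k-1) * (a (n-k-j) * ellCoeff lam j x)) := by
    rw [← Finset.sum_neg_distrib]
    refine Finset.sum_congr rfl fun k hk => ?_
    rw [yCoeff, Finset.mul_sum, ← Finset.sum_neg_distrib]
  rw [hRHS]
  rw [Finset.sum_sigma', Finset.sum_sigma']
  apply Finset.sum_nbij' (i := fun p => ⟨p.1 - p.2, p.2⟩) (j := fun p => ⟨p.1 + p.2, p.2⟩)
  · intro p hp
    simp only [Finset.mem_sigma, Finset.mem_range, Finset.mem_Icc] at hp ⊢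
    omega
  · intro p hp
    simp only [Finset.mem_sigma, Finset.mem_range, Finset.mem_Icc] at hp ⊢
    omega
  · rintro ⟨k, j⟩ hp
    simp only [Finset.mem_sigma, Finset.mem_range] at hp
    dsimp only
    have hkj : k - j + j = k := by omega
    rw [hkj]
  · rintro ⟨k, j⟩ hp
    simp only [Finset.mem_sigma, Finset.mem_range, Finset.mem_Icc] at hp
    dsimp only
    have hkj : k + j - j = k := by omega
    rw [hkj]
  · intro p hp
    simp only [Finset.mem_sigma, Finset.mem_range] at hp
    have e1 : n - p.1 = n - (p.1 - p.2) - p.2 := by omega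
    have e2 : p.1 - 1 - p.2 = (p.1 - p.2) - 1 := by omega
    rw [e1, e2]
    ring
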